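/- Time-slice selection from a measure bound: let k, ρ, T be positive constants and let n be a measurable nonnegative function on Q = K_ρ × (−T, 0). If there is ν_1 ∈ (0,1) such that |Q ∩ {n > μ_+ − k}| ≤ (1 − ν_1)|Q|, then there exists τ_1 ∈ (−T, −ν_1 T/(2 − ν_1)) for which |{x ∈ K_ρ : n(x, τ_1) > μ_+ − k}| ≤ (1 − ν_1/2)|K_ρ|. -/

import Mathlib

open MeasureTheory Real Set
open scoped ENNReal

noncomputable section

/-- `Euc d` is Euclidean space `ℝ^d`. -/
abbrev Euc (d : ℕ) := EuclideanSpace ℝ (Fin d)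

/-- `cube d ρ` is the open cube `K_ρ` in `ℝ^d` centered at the origin with side length `2ρ`. -/
def cube (d : ℕ) (ρ : ℝ) : Set (Euc d) := {x | ∀ i, |x i| < ρ}

/-- **Time-slice selection from a measure bound.**
Let `k, ρ, T` be positive constants and let `n` be a measurable nonnegative function on
`Q = K_ρ × (−T, 0)`.  If there is `ν₁ ∈ (0,1)` such that
`|Q ∩ {n > μ₊ − k}| ≤ (1 − ν₁)|Q|`, then there exists
`τ₁ ∈ (−T, −ν₁ T/(2 − ν₁))` for which
`|{x ∈ K_ρ : n(x, τ₁) > μ₊ − k}| ≤ (1 − ν₁/2)|K_ρ|`. -/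
theorem time_slice_selection
    (d : ℕ) (k ρ T μp ν₁ : ℝ)
    (hk : 0 < k) (hρ : 0 < ρ) (hT : 0 < T) (hν : ν₁ ∈ Ioo (0:ℝ) 1)
    (n : Euc d → ℝ → ℝ)
    (hmeas : Measurable (Function.uncurry n))
    (hnonneg : ∀ x : Euc d, ∀ t ∈ Ioo (-T) (0:ℝ), x ∈ cube d ρ → 0 ≤ n x t)
    (hsmall : volume ((cube d ρ ×ˢ Ioo (-T) (0:ℝ)) ∩
        {p : Euc d × ℝ | μp - k < n p.1 p.2})
      ≤ ENNReal.ofReal (1 - ν₁) * volume (cube d ρ ×ˢ Ioo (-T) (0:ℝ))) :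
    ∃ τ₁ ∈ Ioo (-T) (-(ν₁ * T) / (2 - ν₁)),
      volume {x : Euc d | x ∈ cube d ρ ∧ μp - k < n x τ₁}
        ≤ ENNReal.ofReal (1 - ν₁ / 2) * volume (cube d ρ)  := by
  obtain ⟨hν0, hν1⟩ := hν
  set a : ℝ := -(ν₁ * T) / (2 - ν₁) with ha
  have h2ν : (0:ℝ) < 2 - ν₁ := by linarith
  have haneg : a < 0 := div_neg_of_neg_of_pos (by nlinarith) h2ν
  have haT : -T < a := by
    rw [ha, lt_div_iff₀ h2ν]; nlinarith
  -- measurability of the cube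
  have hcube : MeasurableSet (cube d ρ) := by
    have : cube d ρ = ⋂ i, (fun x : Euc d => x i) ⁻¹' (Ioo (-ρ) ρ) := by
      ext x; simp [cube, abs_lt, and_comm]
    rw [this]
    exact MeasurableSet.iInter fun i =>
      (EuclideanSpace.proj i : Euc d →L[ℝ] ℝ).continuous.measurable measurableSet_Ioo
  -- the cube has finite volume
  have hVfin : volume (cube d ρ) < ⊤ := by
    have hsub : cube d ρ ⊆ Metric.closedBall 0 (Real.sqrt d * ρ) := by
      intro x hx
      rw [Metric.mem_closedBall, dist_zero_right]
      have hnorm : ‖x‖ = Real.sqrt (∑ i, ‖x i‖ ^ 2) := EuclideanSpace.norm_eq x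
      rw [hnorm]
      have hb : (∑ i, ‖x i‖ ^ 2) ≤ (d : ℝ) * ρ ^ 2 := by
        calc (∑ i, ‖x i‖ ^ 2) ≤ ∑ _i : Fin d, ρ ^ 2 := by
              apply Finset.sum_le_sum
              intro i _
              have := hx i
              have habs : ‖x i‖ = |x i| := Real.norm_eq_abs _
              nlinarith [abs_nonneg (x i)]
          _ = (d : ℝ) * ρ ^ 2 := by simp [Finset.sum_const, mul_comm]
      calc Real.sqrt (∑ i, ‖x i‖ ^ 2) ≤ Real.sqrt ((d : ℝ) * ρ ^ 2) := Real.sqrt_le_sqrt hb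
        _ = Real.sqrt d * ρ := by
            rw [Real.sqrt_mul (Nat.cast_nonneg d), Real.sqrt_sq hρ.le]
    exact lt_of_le_of_lt (measure_mono hsub)
      (ProperSpace.isCompact_closedBall 0 _).measure_lt_top
  -- the bad set in space-time
  set S : Set (Euc d × ℝ) := (cube d ρ ×ˢ Ioo (-T) (0:ℝ)) ∩
      {p : Euc d × ℝ | μp - k < n p.1 p.2} with hSdef
  have hS : MeasurableSet S := by
    apply (hcube.prod measurableSet_Ioo).inter
    exact hmeas measurableSet_Ioi
  -- slices of S
  set g : ℝ → ℝ≥0∞ := fun τ => volume ((fun x : Euc d => (x, τ)) ⁻¹' S) with hgdef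
  have hgmeas : Measurable g := measurable_measure_prodMk_right hS
  have hslice : ∀ τ ∈ Ioo (-T) a, g τ = volume {x : Euc d | x ∈ cube d ρ ∧ μp - k < n x τ} := by
    intro τ hτ
    have hτ' : τ ∈ Ioo (-T) (0:ℝ) := ⟨hτ.1, lt_of_lt_of_le hτ.2 haneg.le⟩
    have hset : ((fun x : Euc d => (x, τ)) ⁻¹' S) = {x : Euc d | x ∈ cube d ρ ∧ μp - k < n x τ} := by
      ext x
      simp only [hSdef, Set.mem_preimage, Set.mem_inter_iff, Set.mem_prod, Set.mem_setOf_eq]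
      tauto
    simp only [hgdef, hset]
  -- volumes
  have hIvol : volume (Ioo (-T) a) = ENNReal.ofReal (a + T) := by
    rw [Real.volume_Ioo, sub_neg_eq_add]
  have hQvol : volume (cube d ρ ×ˢ Ioo (-T) (0:ℝ))
      = volume (cube d ρ) * ENNReal.ofReal T := by
    rw [Measure.volume_eq_prod, Measure.prod_prod, Real.volume_Ioo]
    norm_num
  -- key real computation
  have hkey : ENNReal.ofReal (1 - ν₁ / 2) * ENNReal.ofReal (a + T)
      = ENNReal.ofReal (1 - ν₁) * ENNReal.ofReal T := by
    rw [← ENNReal.ofReal_mul (by linarith), ← ENNReal.ofReal_mul (by linarith)]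
    congr 1
    rw [ha]
    field_simp
    ring
  set c : ℝ≥0∞ := ENNReal.ofReal (1 - ν₁ / 2) * volume (cube d ρ) with hcdef
  have hc_eq : c * volume (Ioo (-T) a)
      = ENNReal.ofReal (1 - ν₁) * volume (cube d ρ ×ˢ Ioo (-T) (0:ℝ)) := by
    rw [hIvol, hQvol, hcdef, mul_right_comm, hkey]
    ring
  have hcfin : c * volume (Ioo (-T) a) ≠ ⊤ := by
    rw [hIvol, hcdef]
    exact ENNReal.mul_ne_top (ENNReal.mul_ne_top ENNReal.ofReal_ne_top hVfin.ne)
      ENNReal.ofReal_ne_top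
  have hIpos : volume (Ioo (-T) a) ≠ 0 := by
    rw [hIvol]
    simp only [ne_eq, ENNReal.ofReal_eq_zero, not_le]
    linarith
  by_contra hcon
  push_neg at hcon
  -- strict integral inequality
  have h1 : c * volume (Ioo (-T) a) < ∫⁻ τ in Ioo (-T) a, g τ := by
    have := setLIntegral_strict_mono (μ := volume) (f := fun _ => c) (g := g)
      measurableSet_Ioo hIpos hgmeas
      (by rwa [lintegral_const, Measure.restrict_apply_univ])
      (ae_of_all _ (fun τ hτ => by rw [hslice τ hτ]; exact hcon τ hτ))
    rwa [lintegral_const, Measure.restrict_apply_univ] at this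
  have h2 : ∫⁻ τ in Ioo (-T) a, g τ ≤ volume S := by
    calc ∫⁻ τ in Ioo (-T) a, g τ ≤ ∫⁻ τ, g τ := setLIntegral_le_lintegral _ _
      _ = volume S := by
          rw [hgdef]
          rw [show (volume : Measure (Euc d × ℝ)) = (volume : Measure (Euc d)).prod volume
            from Measure.volume_eq_prod _ _]
          exact (Measure.prod_apply_symm hS).symm
  have : c * volume (Ioo (-T) a) < c * volume (Ioo (-T) a) :=
    lt_of_lt_of_le h1 (le_trans h2 (by rw [hc_eq]; exact hsmall))
  exact absurd this (lt_irrefl _)
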